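/- Let R_n be the strong product of three paths on n vertices, i.e., the graph with vertex set {(i,j,k) : 1 ≤ i,j,k ≤ n} in which two distinct vertices (i₁,j₁,k₁) and (i₂,j₂,k₂) are adjacent iff |i₁−i₂| ≤ 1, |j₁−j₂| ≤ 1 and |k₁−k₂| ≤ 1, and let ℛ = {R_n : n ≥ 1}. Then the class ℛ is fractionally Vs-fragile: for every ε > 0, setting u = ⌈3/ε⌉, the class of graphs in which every connected component has at most (u−1)³ vertices is an ε-witness of the fractional Vs-fragility of ℛ. -/

import Mathlib

open Classical Filter

attribute [local instance] Classical.propDecidable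

noncomputable section

/-- A finite graph, bundled with its (finite) vertex type. -/
structure FGraph : Type 1 where
  V : Type
  [fin : Fintype V]
  G : SimpleGraph V

attribute [instance] FGraph.fin

namespace FGraph

/-- The number of vertices. -/
def card (G : FGraph) : ℕ := Fintype.card G.V

/-- The number of edges. -/
def edgeCount (G : FGraph) : ℕ := G.G.edgeSet.ncard

/-- The edge density `|E(G)|/|V(G)|`. -/
def density (G : FGraph) : ℝ := (G.edgeCount : ℝ) / (G.card : ℝ)

/-- `G − X`: the subgraph induced by the complement of `X`. -/
def del (G : FGraph) (X : Set G.V) : FGraph := ⟨↥(Xᶜ), G.G.induce (Xᶜ : Set G.V)⟩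

/-- `H` is (isomorphic to) a subgraph of `G`. -/
def IsSubgraphOf (H G : FGraph) : Prop :=
  ∃ f : H.V → G.V, Function.Injective f ∧ ∀ a b, H.G.Adj a b → G.G.Adj (f a) (f b)

/-- The class `C` is closed under taking subgraphs. -/
def SubgraphClosed (C : Set FGraph) : Prop :=
  ∀ G ∈ C, ∀ H : FGraph, IsSubgraphOf H G → H ∈ C

/-- `G` has maximum degree at most `d`. -/
def maxDegLE (G : FGraph) (d : ℕ) : Prop := ∀ v : G.V, (G.G.neighborSet v).ncard ≤ d

/-- The maximum degree of `G`. -/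
def maxDeg (G : FGraph) : ℕ := Finset.univ.sup fun v : G.V => (G.G.neighborSet v).ncard

/-- The class `C` has bounded maximum degree. -/
def BddMaxDeg (C : Set FGraph) : Prop := ∃ Δ : ℕ, ∀ G ∈ C, G.maxDegLE Δ

/-- `H` is a `d`-minor of `G`: obtained by contracting pairwise disjoint subgraphs of
radius at most `d` (the branch sets `B w`) and deleting vertices and edges. -/
def IsMinor (d : ℕ) (H G : FGraph) : Prop :=
  ∃ B : H.V → Set G.V,
    (∀ w, (B w).Nonempty) ∧
    (Pairwise fun w w' => Disjoint (B w) (B w')) ∧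
    (∀ w : H.V, ∃ v ∈ B w, ∀ u ∈ B w, ∃ p : G.G.Walk v u,
      p.length ≤ d ∧ ∀ x ∈ p.support, x ∈ B w) ∧
    (∀ w w' : H.V, H.G.Adj w w' → ∃ v ∈ B w, ∃ v' ∈ B w', G.G.Adj v v')

/-- The complete graph `K_t` as a bundled finite graph. -/
def completeFG (t : ℕ) : FGraph := ⟨Fin t, ⊤⟩

/-- The set of densities of `k`-minors of graphs in the class `C`. -/
def densSet (k : ℕ) (C : Set FGraph) : Set ℝ :=
  {r | ∃ G ∈ C, ∃ H : FGraph, IsMinor k H G ∧ r = H.density}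

/-- `∇_k(C)`: the supremum of densities of `k`-minors of graphs in `C`. -/
def nablaClass (k : ℕ) (C : Set FGraph) : ℝ := sSup (densSet k C)

/-- `G` has a balanced separation of size at most `s`. -/
def SepAtMost (G : FGraph) (s : ℕ) : Prop :=
  ∃ A B : G.G.Subgraph, A ⊔ B = ⊤ ∧ Disjoint A.edgeSet B.edgeSet ∧
    3 * (A.verts \ B.verts).ncard ≤ 2 * G.card ∧
    3 * (B.verts \ A.verts).ncard ≤ 2 * G.card ∧
    (A.verts ∩ B.verts).ncard ≤ s

/-- `s_C(n)`: the smallest `s` such that every graph in `C` with at most `n` vertices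
has a balanced separation of size at most `s`. -/
def sepf (C : Set FGraph) (n : ℕ) : ℕ :=
  sInf {s | ∀ G ∈ C, G.card ≤ n → SepAtMost G s}

/-- The class `C` has sublinear separators. -/
def SublinearSep (C : Set FGraph) : Prop :=
  Tendsto (fun n : ℕ => (sepf C n : ℝ) / (n : ℝ)) atTop (nhds 0)

/-- The class `C` has strongly sublinear separators. -/
def StronglySublinearSep (C : Set FGraph) : Prop :=
  ∃ c δ : ℝ, 1 ≤ c ∧ 0 ≤ δ ∧ δ < 1 ∧ ∀ n : ℕ, (sepf C n : ℝ) ≤ c * (n : ℝ) ^ δ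

/-- The number of vertices of the connected component of `v`. -/
def compSize (G : FGraph) (v : G.V) : ℕ := ((G.G.connectedComponentMk v).supp).ncard

/-- `G` has a fractional `C`-complementary packing of thickness at most `ε`. -/
def FracPack (G : FGraph) (C : Set FGraph) (ε : ℝ) : Prop :=
  ∃ π : Finset G.V → ℝ,
    (∀ X, 0 ≤ π X) ∧
    (∑ X : Finset G.V, π X = 1) ∧
    (∀ X : Finset G.V, π X ≠ 0 → G.del (↑X : Set G.V) ∈ C) ∧
    (∀ v : G.V, ∑ X ∈ Finset.univ.filter (fun X : Finset G.V => v ∈ X), π X ≤ ε)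

/-- `C` is an `ε`-witness for the class `Gc`: every graph in `Gc` has a fractional
`C`-complementary packing of thickness at most `ε`. -/
def Witness (C Gc : Set FGraph) (ε : ℝ) : Prop := ∀ G ∈ Gc, FracPack G C ε

/-- `Gc` is fractionally `P`-fragile. -/
def FracFragile (P : Set (Set FGraph)) (Gc : Set FGraph) : Prop :=
  ∀ ε : ℝ, 0 < ε → ∃ C ∈ P, Witness C Gc ε

/-- The class property `Vs` of all graph classes with bounded component size. -/
def Vs : Set (Set FGraph) := {C | ∃ t : ℕ, ∀ G ∈ C, ∀ v : G.V, G.compSize v ≤ t}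

/-- `(T, β)` is a tree decomposition of `G`. -/
def IsTreeDecomp (G : FGraph) {ι : Type} (T : SimpleGraph ι) (β : ι → Set G.V) : Prop :=
  T.IsTree ∧
  (∀ v : G.V, ∃ u, v ∈ β u) ∧
  (∀ v w : G.V, G.G.Adj v w → ∃ u, v ∈ β u ∧ w ∈ β u) ∧
  (∀ v : G.V, (T.induce {u | v ∈ β u}).Connected)

/-- `G` has treewidth at most `k`. -/
def twLE (G : FGraph) (k : ℕ) : Prop :=
  ∃ (ι : Type) (_ : Fintype ι) (T : SimpleGraph ι) (β : ι → Set G.V),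
    IsTreeDecomp G T β ∧ ∀ u, (β u).ncard ≤ k + 1

/-- The treewidth of `G`. -/
def treewidth (G : FGraph) : ℕ := sInf {k | twLE G k}

/-- The class property `Tw` of all graph classes with bounded treewidth. -/
def Tw : Set (Set FGraph) := {C | ∃ k : ℕ, ∀ G ∈ C, twLE G k}

end FGraph

/-- `R_n`: the strong product of three paths on `n` vertices. -/
def Rgraph (n : ℕ) : FGraph :=
  ⟨Fin n × Fin n × Fin n,
    SimpleGraph.fromRel fun a b =>
      |(a.1 : ℤ) - (b.1 : ℤ)| ≤ 1 ∧ |(a.2.1 : ℤ) - (b.2.1 : ℤ)| ≤ 1 ∧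
        |(a.2.2 : ℤ) - (b.2.2 : ℤ)| ≤ 1⟩

/-- The class `ℛ = {R_n : n ≥ 1}`. -/
def Rclass : Set FGraph := {R | ∃ n : ℕ, 1 ≤ n ∧ R = Rgraph n}


section Aux

lemma ediv_succ_eq (u : ℕ) (hu : 0 < u) (z : ℤ) (h : ¬ (u:ℤ) ∣ (z+1)) : (z+1)/(u:ℤ) = z/(u:ℤ) := by
  have hu' : (0:ℤ) < u := by exact_mod_cast hu
  have hdecomp := Int.mul_ediv_add_emod z u
  set q := z / (u:ℤ) with hq
  set r := z % (u:ℤ) with hr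
  have hr0 : 0 ≤ r := Int.emod_nonneg z (by positivity)
  have hru : r < u := Int.emod_lt_of_pos z hu'
  have hrne : r + 1 ≠ u := by
    intro he
    exact h ⟨q + 1, by linarith⟩
  have hz : z + 1 = (r + 1) + (u:ℤ) * q := by linarith
  rw [hz, Int.add_mul_ediv_left _ _ (by positivity),
    Int.ediv_eq_zero_of_lt (by linarith) (by omega), zero_add]

lemma emod_eq_iff_dvd (u a : ℕ) (ha : a < u) (x : ℤ) : x % (u:ℤ) = a ↔ (u:ℤ) ∣ x - a := by
  have h1 : (a:ℤ) % u = a := Int.emod_eq_of_lt (by positivity) (by exact_mod_cast ha)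
  rw [Int.dvd_iff_emod_eq_zero, ← Int.emod_eq_emod_iff_emod_sub_eq_zero, h1]

lemma blk_step (u a : ℕ) (hu : 0 < u) (ha : a < u) (x y : ℤ) (hxy : |x - y| ≤ 1)
    (hx : x % (u:ℤ) ≠ a) (hy : y % (u:ℤ) ≠ a) :
    (x - a - 1)/(u:ℤ) = (y - a - 1)/(u:ℤ) := by
  have h3 := abs_le.mp hxy
  have hcase : x = y ∨ x = y + 1 ∨ y = x + 1 := by omega
  rcases hcase with h | h | h
  · rw [h]
  · have hnd : ¬ (u:ℤ) ∣ ((y - a - 1) + 1) := by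
      intro hd
      exact hy ((emod_eq_iff_dvd u a ha y).mpr (by
        have : (u:ℤ) ∣ y - a := by convert hd using 1; ring
        exact this))
    have := ediv_succ_eq u hu (y - a - 1) hnd
    rw [h]
    convert this using 2
    ring
  · have hnd : ¬ (u:ℤ) ∣ ((x - a - 1) + 1) := by
      intro hd
      exact hx ((emod_eq_iff_dvd u a ha x).mpr (by
        have : (u:ℤ) ∣ x - a := by convert hd using 1; ring
        exact this))
    have := ediv_succ_eq u hu (x - a - 1) hnd
    rw [h]
    symm
    convert this using 2
    ring

lemma reach_inv {V : Type*} {α : Type*} {G : SimpleGraph V} (f : V → α)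
    (h : ∀ a b, G.Adj a b → f a = f b) {x y : V} (hr : G.Reachable x y) : f x = f y := by
  obtain ⟨p⟩ := hr
  induction p with
  | nil => rfl
  | cons ha _ ih => exact (h _ _ ha).trans ih

/-- block index of a coordinate -/
def blk (u a : ℕ) {n : ℕ} (i : Fin n) : ℤ := (((i:ℕ):ℤ) - a - 1)/(u:ℤ)

lemma good_card (n u a : ℕ) (hu : 0 < u) (ha : a < u) (m : ℤ) :
    (Finset.univ.filter fun i : Fin n => blk u a i = m ∧ (i:ℕ) % u ≠ a).card ≤ u - 1 := by
  have hu' : (0:ℤ) < u := by exact_mod_cast hu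
  have hbound : ∀ i ∈ (Finset.univ.filter fun i : Fin n =>
      blk u a i = m ∧ (i:ℕ) % u ≠ a),
      ((i:ℕ):ℤ) ∈ Finset.Icc ((a:ℤ) + 1 + u*m) ((a:ℤ) + u*m + u - 1) := by
    intro i hi
    rw [Finset.mem_filter] at hi
    obtain ⟨-, hq, hne⟩ := hi
    rw [blk] at hq
    set x : ℤ := ((i:ℕ):ℤ) with hxdef
    have hdecomp := Int.mul_ediv_add_emod (x - a - 1) u
    rw [hq] at hdecomp
    have hr0 : 0 ≤ (x - a - 1) % (u:ℤ) := Int.emod_nonneg _ (by positivity)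
    have hru : (x - a - 1) % (u:ℤ) < u := Int.emod_lt_of_pos _ hu'
    have hxlt : x ≤ (a:ℤ) + u*m + u := by linarith
    have hxge : (a:ℤ) + 1 + u*m ≤ x := by linarith
    have hxne : x ≠ (a:ℤ) + u*m + u := by
      intro he
      apply hne
      have hdvd : (u:ℤ) ∣ x - a := ⟨m + 1, by rw [he]; ring⟩
      have h5 := (emod_eq_iff_dvd u a ha x).mpr hdvd
      have hxmod : x % (u:ℤ) = ((i:ℕ) % u : ℕ) := by
        rw [hxdef]; push_cast; rfl
      rw [hxmod] at h5
      exact_mod_cast h5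
    rw [Finset.mem_Icc]
    omega
  calc _ ≤ (Finset.Icc ((a:ℤ) + 1 + u*m) ((a:ℤ) + u*m + u - 1)).card := by
        refine Finset.card_le_card_of_injOn (fun i : Fin n => ((i:ℕ):ℤ)) hbound ?_
        intro i _ j _ hij
        simp only at hij
        have : (i:ℕ) = (j:ℕ) := by exact_mod_cast hij
        exact Fin.val_injective this
    _ = u - 1 := by rw [Int.card_Icc]; omega

/-- the set of deleted vertices for a shift `t` -/
def Xset (n u : ℕ) (t : Fin u × Fin u × Fin u) : Finset (Fin n × Fin n × Fin n) :=
  Finset.univ.filter fun v =>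
    (v.1 : ℕ) % u = (t.1 : ℕ) ∨ (v.2.1 : ℕ) % u = (t.2.1 : ℕ) ∨ (v.2.2 : ℕ) % u = (t.2.2 : ℕ)

/-- the same set, typed at `(Rgraph n).V` -/
def XsetR (n u : ℕ) (t : Fin u × Fin u × Fin u) : Finset ((Rgraph n).V) := Xset n u t

lemma comp_bound (n u : ℕ) (hu : 0 < u) (t : Fin u × Fin u × Fin u) :
    ∀ v : ((Rgraph n).del (↑(XsetR n u t) : Set ((Rgraph n).V))).V,
    ((Rgraph n).del (↑(XsetR n u t) : Set ((Rgraph n).V))).compSize v ≤ (u-1)^3 := by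
  set Gd := (Rgraph n).del (↑(XsetR n u t) : Set ((Rgraph n).V)) with hGd
  intro v
  have memP : ∀ w : Gd.V, (w.val.1 : ℕ) % u ≠ (t.1 : ℕ) ∧ (w.val.2.1 : ℕ) % u ≠ (t.2.1 : ℕ) ∧
      (w.val.2.2 : ℕ) % u ≠ (t.2.2 : ℕ) := by
    intro w
    have h2 : ¬ ((w.val.1 : ℕ) % u = (t.1 : ℕ) ∨ (w.val.2.1 : ℕ) % u = (t.2.1 : ℕ) ∨
        (w.val.2.2 : ℕ) % u = (t.2.2 : ℕ)) := by
      intro hc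
      exact w.2 (Finset.mem_filter.mpr ⟨Finset.mem_univ _, hc⟩)
    push_neg at h2
    exact h2
  set F : Gd.V → ℤ × ℤ × ℤ :=
    fun w => (blk u (t.1 : ℕ) w.val.1, blk u (t.2.1 : ℕ) w.val.2.1, blk u (t.2.2 : ℕ) w.val.2.2)
    with hF
  have modconv : ∀ (i : Fin n) (a : ℕ), (i : ℕ) % u ≠ a → ((i:ℕ):ℤ) % (u:ℤ) ≠ (a:ℤ) := by
    intro i a h hc
    apply h
    have : (((i:ℕ) % u : ℕ) : ℤ) = ((i:ℕ):ℤ) % (u:ℤ) := by push_cast; ring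
    rw [← this] at hc
    exact_mod_cast hc
  have hadj : ∀ x y : Gd.V, Gd.G.Adj x y → F x = F y := by
    intro x y hxy
    have hADJ : (SimpleGraph.fromRel fun a b : Fin n × Fin n × Fin n =>
        |((a.1:ℕ):ℤ) - ((b.1:ℕ):ℤ)| ≤ 1 ∧ |((a.2.1:ℕ):ℤ) - ((b.2.1:ℕ):ℤ)| ≤ 1 ∧
          |((a.2.2:ℕ):ℤ) - ((b.2.2:ℕ):ℤ)| ≤ 1).Adj x.val y.val := hxy
    replace hADJ := (SimpleGraph.fromRel_adj _ _ _).mp hADJ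
    have habs : |((x.val.1:ℕ):ℤ) - ((y.val.1:ℕ):ℤ)| ≤ 1 ∧
        |((x.val.2.1:ℕ):ℤ) - ((y.val.2.1:ℕ):ℤ)| ≤ 1 ∧
        |((x.val.2.2:ℕ):ℤ) - ((y.val.2.2:ℕ):ℤ)| ≤ 1 := by
      rcases hADJ.2 with h | h
      · exact h
      · refine ⟨?_, ?_, ?_⟩ <;> rw [abs_sub_comm]
        · exact h.1
        · exact h.2.1
        · exact h.2.2
    obtain ⟨hx1, hx2, hx3⟩ := memP x
    obtain ⟨hy1, hy2, hy3⟩ := memP y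
    have e1 := blk_step u (t.1 : ℕ) hu t.1.isLt _ _ habs.1 (modconv _ _ hx1) (modconv _ _ hy1)
    have e2 := blk_step u (t.2.1 : ℕ) hu t.2.1.isLt _ _ habs.2.1 (modconv _ _ hx2) (modconv _ _ hy2)
    have e3 := blk_step u (t.2.2 : ℕ) hu t.2.2.isLt _ _ habs.2.2 (modconv _ _ hx3) (modconv _ _ hy3)
    simp only [hF, Prod.mk.injEq, blk]
    exact ⟨e1, e2, e3⟩
  have hsupp : ∀ w ∈ (Gd.G.connectedComponentMk v).supp, F w = F v := by
    intro w hw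
    rw [SimpleGraph.ConnectedComponent.mem_supp_iff] at hw
    exact reach_inv F hadj (SimpleGraph.ConnectedComponent.eq.mp hw)
  set box : Finset (Fin n × Fin n × Fin n) :=
    (Finset.univ.filter fun i : Fin n => blk u (t.1:ℕ) i = blk u (t.1:ℕ) v.val.1 ∧ (i:ℕ)%u ≠ (t.1:ℕ)) ×ˢ
    ((Finset.univ.filter fun i : Fin n => blk u (t.2.1:ℕ) i = blk u (t.2.1:ℕ) v.val.2.1 ∧ (i:ℕ)%u ≠ (t.2.1:ℕ)) ×ˢ
     (Finset.univ.filter fun i : Fin n => blk u (t.2.2:ℕ) i = blk u (t.2.2:ℕ) v.val.2.2 ∧ (i:ℕ)%u ≠ (t.2.2:ℕ)))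
    with hbox
  have himg : ∀ w ∈ (Gd.G.connectedComponentMk v).supp,
      (w.val : Fin n × Fin n × Fin n) ∈ (↑box : Set (Fin n × Fin n × Fin n)) := by
    intro w hw
    have hFw := hsupp w hw
    have hm := memP w
    have h1 : blk u (t.1:ℕ) w.val.1 = blk u (t.1:ℕ) v.val.1 := congrArg Prod.fst hFw
    have h2 : blk u (t.2.1:ℕ) w.val.2.1 = blk u (t.2.1:ℕ) v.val.2.1 :=
      congrArg (fun p => p.2.1) hFw
    have h3 : blk u (t.2.2:ℕ) w.val.2.2 = blk u (t.2.2:ℕ) v.val.2.2 :=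
      congrArg (fun p => p.2.2) hFw
    refine Finset.mem_coe.mpr ?_
    exact Finset.mem_product.mpr ⟨Finset.mem_filter.mpr ⟨Finset.mem_univ _, h1, hm.1⟩,
      Finset.mem_product.mpr ⟨Finset.mem_filter.mpr ⟨Finset.mem_univ _, h2, hm.2.1⟩,
        Finset.mem_filter.mpr ⟨Finset.mem_univ _, h3, hm.2.2⟩⟩⟩
  have hinj : Set.InjOn (fun w : Gd.V => (w.val : Fin n × Fin n × Fin n))
      (Gd.G.connectedComponentMk v).supp := by
    intro a _ b _ hab
    exact Subtype.val_injective hab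
  show Gd.compSize v ≤ (u-1)^3
  calc Gd.compSize v
      = ((Gd.G.connectedComponentMk v).supp).ncard := rfl
    _ ≤ (↑box : Set (Fin n × Fin n × Fin n)).ncard :=
        Set.ncard_le_ncard_of_injOn _ himg hinj (box : Set (Fin n × Fin n × Fin n)).toFinite
    _ = box.card := Set.ncard_coe_finset box
    _ ≤ (u-1)^3 := by
        rw [hbox, Finset.card_product, Finset.card_product]
        have g1 := good_card n u (t.1:ℕ) hu t.1.isLt (blk u (t.1:ℕ) v.val.1)
        have g2 := good_card n u (t.2.1:ℕ) hu t.2.1.isLt (blk u (t.2.1:ℕ) v.val.2.1)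
        have g3 := good_card n u (t.2.2:ℕ) hu t.2.2.isLt (blk u (t.2.2:ℕ) v.val.2.2)
        calc _ ≤ (u-1) * ((u-1) * (u-1)) :=
              Nat.mul_le_mul g1 (Nat.mul_le_mul g2 g3)
          _ = (u-1)^3 := by ring

lemma count_notmem (n u : ℕ) (hu : 0 < u) (v : Fin n × Fin n × Fin n) :
    (Finset.univ.filter fun t : Fin u × Fin u × Fin u => v ∉ Xset n u t).card = (u-1)^3 := by
  have hsplit : (Finset.univ.filter fun t : Fin u × Fin u × Fin u => v ∉ Xset n u t) =
      (Finset.univ.filter fun a : Fin u => ¬((v.1:ℕ)%u = (a:ℕ))) ×ˢ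
      ((Finset.univ.filter fun a : Fin u => ¬((v.2.1:ℕ)%u = (a:ℕ))) ×ˢ
       (Finset.univ.filter fun a : Fin u => ¬((v.2.2:ℕ)%u = (a:ℕ)))) := by
    ext t
    simp [Xset, Finset.mem_product, not_or]
  rw [hsplit, Finset.card_product, Finset.card_product]
  have hc : ∀ (x : ℕ), (Finset.univ.filter fun a : Fin u => ¬(x % u = (a:ℕ))).card = u - 1 := by
    intro x
    have he : (Finset.univ.filter fun a : Fin u => ¬(x % u = (a:ℕ))) =
        Finset.univ.erase ⟨x % u, Nat.mod_lt x hu⟩ := by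
      ext a
      simp [Fin.ext_iff, eq_comm]
    rw [he, Finset.card_erase_of_mem (Finset.mem_univ _), Finset.card_univ, Fintype.card_fin]
  rw [hc, hc, hc]; ring

lemma count_mem_le (n u : ℕ) (hu : 0 < u) (v : Fin n × Fin n × Fin n) :
    (Finset.univ.filter fun t : Fin u × Fin u × Fin u => v ∈ Xset n u t).card ≤ 3 * u^2 := by
  have h1 := Finset.card_filter_add_card_filter_not
    (s := (Finset.univ : Finset (Fin u × Fin u × Fin u)))
    (p := fun t => v ∈ Xset n u t)
  rw [count_notmem n u hu v] at h1
  have h2 : (Finset.univ : Finset (Fin u × Fin u × Fin u)).card = u^3 := by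
    simp [Finset.card_univ]
    ring
  rw [h2] at h1
  have h3 : u^3 ≤ 3*u^2 + (u-1)^3 := by
    obtain ⟨m, rfl⟩ := Nat.exists_eq_add_of_le hu
    simp only [Nat.add_sub_cancel_left]
    ring_nf
    nlinarith
  omega

end Aux

/-- **Lemma 9.** The class `ℛ` is fractionally `Vs`-fragile; moreover for every `ε > 0`,
with `u = ⌈3/ε⌉`, the class of graphs whose components have at most `(u-1)³` vertices
is an `ε`-witness of the fractional `Vs`-fragility of `ℛ`. -/
theorem stmt4 :
    FGraph.FracFragile FGraph.Vs Rclass ∧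
    ∀ ε : ℝ, 0 < ε →
      ({G : FGraph | ∀ v : G.V, G.compSize v ≤ (⌈3 / ε⌉₊ - 1) ^ 3} ∈ FGraph.Vs ∧
        FGraph.Witness {G : FGraph | ∀ v : G.V, G.compSize v ≤ (⌈3 / ε⌉₊ - 1) ^ 3}
          Rclass ε) := by
  have main : ∀ ε : ℝ, 0 < ε →
      ({G : FGraph | ∀ v : G.V, G.compSize v ≤ (⌈3 / ε⌉₊ - 1) ^ 3} ∈ FGraph.Vs ∧
        FGraph.Witness {G : FGraph | ∀ v : G.V, G.compSize v ≤ (⌈3 / ε⌉₊ - 1) ^ 3}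
          Rclass ε) := by
    intro ε hε
    set u := ⌈3 / ε⌉₊ with hudef
    have hu : 0 < u := Nat.ceil_pos.mpr (by positivity)
    have hur : (0:ℝ) < (u:ℝ) := by exact_mod_cast hu
    have hu3 : (3:ℝ) / ε ≤ (u:ℝ) := Nat.le_ceil _
    have heps : (3:ℝ) / (u:ℝ) ≤ ε := by
      rw [div_le_iff₀ hur]
      have h4 := (div_le_iff₀ hε).mp hu3
      linarith
    refine ⟨⟨(u-1)^3, fun G hG w => hG w⟩, ?_⟩
    rintro G ⟨n, hn, rfl⟩
    refine ⟨fun X => (1/(u:ℝ)^3) *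
      ∑ t : Fin u × Fin u × Fin u, if XsetR n u t = X then 1 else 0, ?_, ?_, ?_, ?_⟩
    · intro X
      apply mul_nonneg (by positivity)
      apply Finset.sum_nonneg
      intro t _
      split <;> norm_num
    · rw [← Finset.mul_sum, Finset.sum_comm]
      have hinner : ∀ t : Fin u × Fin u × Fin u,
          (∑ X : Finset (Rgraph n).V, if XsetR n u t = X then (1:ℝ) else 0) = 1 := by
        intro t
        have hs := Finset.sum_eq_single_of_mem (s := (Finset.univ : Finset (Finset (Rgraph n).V)))
          (f := fun X => if XsetR n u t = X then (1:ℝ) else 0) (XsetR n u t)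
          (Finset.mem_univ _) (fun b _ hb => if_neg (fun h => hb h.symm))
        rw [hs]
        simp
      rw [Finset.sum_congr rfl fun t _ => hinner t]
      rw [Finset.sum_const, Finset.card_univ]
      have hcard : Fintype.card (Fin u × Fin u × Fin u) = u^3 := by
        simp
        ring
      rw [hcard]
      have hne : ((u:ℝ))^3 ≠ 0 := by positivity
      field_simp
      simp
    · intro X hX
      have hex : ∃ t : Fin u × Fin u × Fin u, XsetR n u t = X := by
        by_contra hc
        push_neg at hc
        apply hX
        show (1/(u:ℝ)^3) * (∑ t : Fin u × Fin u × Fin u,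
          if XsetR n u t = X then (1:ℝ) else 0) = 0
        rw [Finset.sum_eq_zero fun t _ => if_neg (hc t), mul_zero]
      obtain ⟨t, rfl⟩ := hex
      intro w
      exact comp_bound n u hu t w
    · intro w
      have hstep : (∑ X ∈ Finset.univ.filter (fun X : Finset (Rgraph n).V => w ∈ X),
          (1/(u:ℝ)^3) * ∑ t : Fin u × Fin u × Fin u, if XsetR n u t = X then 1 else 0) =
          (1/(u:ℝ)^3) * ((Finset.univ.filter fun t : Fin u × Fin u × Fin u =>
            w ∈ XsetR n u t).card : ℝ) := by
        rw [← Finset.mul_sum, Finset.sum_comm]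
        congr 1
        rw [← Finset.sum_boole]
        apply Finset.sum_congr rfl
        intro t _
        by_cases hw : w ∈ XsetR n u t
        · rw [if_pos hw]
          have hs := Finset.sum_eq_single_of_mem
            (s := Finset.univ.filter (fun X : Finset (Rgraph n).V => w ∈ X))
            (f := fun X => if XsetR n u t = X then (1:ℝ) else 0) (XsetR n u t)
            (Finset.mem_filter.mpr ⟨Finset.mem_univ _, hw⟩)
            (fun b _ hb => if_neg (fun h => hb h.symm))
          rw [hs]
          simp
        · rw [if_neg hw]
          apply Finset.sum_eq_zero
          intro X hX
          rw [Finset.mem_filter] at hX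
          rw [if_neg]
          intro hEq
          exact hw (by rw [hEq]; exact hX.2)
      rw [hstep]
      have hfc : (Finset.univ.filter fun t : Fin u × Fin u × Fin u => w ∈ XsetR n u t).card
          = (Finset.univ.filter fun t : Fin u × Fin u × Fin u => w ∈ Xset n u t).card := by
        congr 1
        apply Finset.filter_congr
        intro t _
        exact Iff.rfl
      have hcnt : ((Finset.univ.filter fun t : Fin u × Fin u × Fin u =>
          w ∈ XsetR n u t).card : ℝ) ≤ 3 * (u:ℝ)^2 := by
        rw [hfc]
        have := count_mem_le n u hu w
        norm_cast
        convert this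
        exact Iff.rfl
      calc (1/(u:ℝ)^3) * ((Finset.univ.filter fun t : Fin u × Fin u × Fin u =>
            w ∈ XsetR n u t).card : ℝ)
          ≤ (1/(u:ℝ)^3) * (3 * (u:ℝ)^2) := by
            apply mul_le_mul_of_nonneg_left hcnt (by positivity)
        _ = 3 / (u:ℝ) := by field_simp
        _ ≤ ε := heps
  exact ⟨fun ε hε => ⟨_, (main ε hε).1, (main ε hε).2⟩, main⟩
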